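/- The R-matrix R(u) = I + P/u − K/(u+κ) with 2κ = (M−N−2)θ₀ satisfies unitarity: R₁₂(u) R₁₂(−u) = (1 − 1/u²) I. -/

import Mathlib

open Matrix BigOperators Finset

noncomputable section

namespace OspYangian

variable (M N : ℕ) (θ₀ : ℤ)

/-- The grading exponent `[i] ∈ {0,1}`, defined so that `(-1)^[i] = θ₀` for `i < M`
and `(-1)^[i] = -θ₀` for `M ≤ i < M+N` (0-indexed). -/
def gr (i : Fin (M + N)) : ℕ :=
  if (i : ℕ) < M then (if θ₀ = 1 then 0 else 1) else (if θ₀ = 1 then 1 else 0)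

/-- The sign `θ_i`: `+1` for `i < M + N/2`, `-1` otherwise (0-indexed). -/
def th (i : Fin (M + N)) : ℂ :=
  if (i : ℕ) < M + N / 2 then 1 else -1

/-- The conjugate index `ī`: `M+1-i` resp. `2M+N+1-i` in 1-indexed notation. -/
def bar (i : Fin (M + N)) : Fin (M + N) :=
  if _h : (i : ℕ) < M then ⟨M - 1 - (i : ℕ), by omega⟩
  else ⟨2 * M + N - 1 - (i : ℕ), by have := i.isLt; omega⟩

/-- Coefficient matrices of elements of the graded tensor square of `gl(M|N)`:
the entry at `((i,k),(j,l))` is the coefficient of `E_{ij} ⊗ E_{kl}`. -/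
abbrev Mat := Matrix (Fin (M + N) × Fin (M + N)) (Fin (M + N) × Fin (M + N)) ℂ

/-- Multiplication in the graded tensor product algebra:
`(A⊗B)(C⊗D) = (-1)^{[B][C]} AC ⊗ BD` on homogeneous elements. -/
def gmul (A B : Mat M N) : Mat M N := fun p q =>
  ∑ j : Fin (M + N), ∑ l : Fin (M + N),
    (-1 : ℂ) ^ ((gr M N θ₀ p.2 + gr M N θ₀ l) * (gr M N θ₀ j + gr M N θ₀ q.1)) *
      A p (j, l) * B (j, l) q

/-- The superpermutation `P = Σ_{i,j} (-1)^{[j]} E_{ij} ⊗ E_{ji}`. -/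
def P : Mat M N := fun p q =>
  if p.1 = q.2 ∧ p.2 = q.1 then (-1 : ℂ) ^ gr M N θ₀ p.2 else 0

/-- `K = Σ_{i,j} (-1)^{[i][j]} θ_i θ_j E_{j̄ ī} ⊗ E_{ji}`. -/
def K : Mat M N := fun p q =>
  if p.1 = bar M N p.2 ∧ q.1 = bar M N q.2 then
    (-1 : ℂ) ^ (gr M N θ₀ q.2 * gr M N θ₀ p.2) * th M N q.2 * th M N p.2
  else 0

/-- `κ` with `2κ = (M - N - 2)θ₀`. -/
def kap : ℂ := (((M : ℂ) - (N : ℂ) - 2) * (θ₀ : ℂ)) / 2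

/-- The rational R-matrix `R(u) = I + P/u - K/(u+κ)`. -/
def R (u : ℂ) : Mat M N :=
  1 + u⁻¹ • P M N θ₀ - (u + kap M N θ₀)⁻¹ • K M N θ₀

lemma bar_val (i : Fin (M + N)) :
    (bar M N i : ℕ) = if (i : ℕ) < M then M - 1 - (i : ℕ) else 2 * M + N - 1 - (i : ℕ) := by
  unfold bar; split_ifs <;> rfl

lemma bar_bar (i : Fin (M + N)) : bar M N (bar M N i) = i := by
  have := i.isLt
  apply Fin.ext
  rw [bar_val, bar_val]
  split_ifs <;> omega

lemma gr_bar (i : Fin (M + N)) : gr M N θ₀ (bar M N i) = gr M N θ₀ i := by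
  have := i.isLt
  have hb := bar_val M N i
  unfold gr
  split_ifs at hb ⊢ <;> first | rfl | omega

lemma gr_mem (i : Fin (M + N)) : gr M N θ₀ i = 0 ∨ gr M N θ₀ i = 1 := by
  unfold gr; split_ifs <;> simp

lemma th_sq (i : Fin (M + N)) : th M N i * th M N i = 1 := by
  unfold th; split_ifs <;> norm_num

lemma th_bar (hN : Even N) (i : Fin (M + N)) :
    th M N (bar M N i) = if (i : ℕ) < M then th M N i else -th M N i := by
  obtain ⟨r, hr⟩ := hN
  have := i.isLt
  have hb := bar_val M N i
  unfold th
  split_ifs at hb ⊢ <;> first | (exfalso; first | omega | assumption) | norm_num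

lemma key (hθ : θ₀ = 1 ∨ θ₀ = -1) (hN : Even N) (i : Fin (M + N)) :
    (-1 : ℂ) ^ gr M N θ₀ i * th M N i = (θ₀ : ℂ) * th M N (bar M N i) := by
  rw [th_bar M N hN i]
  unfold gr
  rcases hθ with h | h <;> subst h <;> split_ifs <;>
    first | (exfalso; first | omega | assumption) | (push_cast; ring)

lemma sum_pow (hθ : θ₀ = 1 ∨ θ₀ = -1) :
    ∑ l : Fin (M + N), (-1 : ℂ) ^ gr M N θ₀ l = ((M : ℂ) - N) * (θ₀ : ℂ) := by
  have h1 : ∀ l : Fin (M + N), (-1 : ℂ) ^ gr M N θ₀ l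
      = if (l : ℕ) < M then (θ₀ : ℂ) else -(θ₀ : ℂ) := by
    intro l; unfold gr; rcases hθ with h | h <;> subst h <;> split_ifs <;>
      first | (exfalso; first | omega | assumption) | (push_cast; norm_num)
  simp only [h1]
  rw [Fin.sum_univ_eq_sum_range (fun i => if i < M then (θ₀ : ℂ) else -(θ₀ : ℂ))]
  rw [Finset.sum_ite]
  simp only [Finset.sum_const, nsmul_eq_mul]
  have hc1 : (Finset.filter (fun i => i < M) (Finset.range (M + N))) = Finset.range M := by
    ext x; simp; omega
  have hc2 : (Finset.filter (fun i => ¬ i < M) (Finset.range (M + N))).card = N := by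
    have h : (Finset.filter (fun i => ¬ i < M) (Finset.range (M + N))) = Finset.Ico M (M + N) := by
      ext x; simp [Finset.mem_Ico]; omega
    rw [h, Nat.card_Ico]; omega
  rw [hc1, hc2, Finset.card_range]
  push_cast
  ring

lemma bar_comm {i j : Fin (M + N)} : i = bar M N j ↔ j = bar M N i := by
  constructor <;> (rintro rfl; rw [bar_bar])

lemma gmul_one_left (A : Mat M N) : gmul M N θ₀ 1 A = A := by
  funext p q
  unfold gmul
  rw [Finset.sum_eq_single p.1]
  · rw [Finset.sum_eq_single p.2]
    · rw [show ((p.1, p.2) : Fin (M+N) × Fin (M+N)) = p from rfl, Matrix.one_apply_eq]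
      rcases gr_mem M N θ₀ p.2 with h|h <;> rcases gr_mem M N θ₀ p.1 with h'|h' <;>
        rcases gr_mem M N θ₀ q.1 with h''|h'' <;> rw [h, h', h''] <;> norm_num
    · intro b _ hb
      rw [Matrix.one_apply_ne (by intro hc; exact hb (congrArg Prod.snd hc).symm)]
      ring
    · intro h; exact absurd (Finset.mem_univ _) h
  · intro b _ hb
    apply Finset.sum_eq_zero
    intro l _
    rw [Matrix.one_apply_ne (by intro hc; exact hb (congrArg Prod.fst hc).symm)]
    ring
  · intro h; exact absurd (Finset.mem_univ _) h

lemma gmul_one_right (A : Mat M N) : gmul M N θ₀ A 1 = A := by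
  funext p q
  unfold gmul
  rw [Finset.sum_eq_single q.1]
  · rw [Finset.sum_eq_single q.2]
    · rw [show ((q.1, q.2) : Fin (M+N) × Fin (M+N)) = q from rfl, Matrix.one_apply_eq]
      rcases gr_mem M N θ₀ p.2 with h|h <;> rcases gr_mem M N θ₀ q.1 with h'|h' <;>
        rcases gr_mem M N θ₀ q.2 with h''|h'' <;> rw [h, h', h''] <;> norm_num
    · intro b _ hb
      rw [Matrix.one_apply_ne (by intro hc; exact hb (congrArg Prod.snd hc))]
      ring
    · intro h; exact absurd (Finset.mem_univ _) h
  · intro b _ hb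
    apply Finset.sum_eq_zero
    intro l _
    rw [Matrix.one_apply_ne (by intro hc; exact hb (congrArg Prod.fst hc))]
    ring
  · intro h; exact absurd (Finset.mem_univ _) h

lemma gmul_P_P : gmul M N θ₀ (P M N θ₀) (P M N θ₀) = 1 := by
  funext p q
  by_cases hpq : p = q
  · subst hpq
    unfold gmul
    rw [Matrix.one_apply_eq, Finset.sum_eq_single p.2]
    · rw [Finset.sum_eq_single p.1]
      · unfold P
        rw [if_pos ⟨rfl, rfl⟩, if_pos ⟨rfl, rfl⟩]
        rcases gr_mem M N θ₀ p.1 with h|h <;> rcases gr_mem M N θ₀ p.2 with h'|h' <;>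
          rw [h, h'] <;> norm_num
      · intro b _ hb
        unfold P
        rw [if_neg (by rintro ⟨h1, -⟩; exact hb h1.symm)]
        ring
      · intro h; exact absurd (Finset.mem_univ _) h
    · intro b _ hb
      apply Finset.sum_eq_zero
      intro l _
      unfold P
      rw [if_neg (by rintro ⟨-, h2⟩; exact hb h2.symm)]
      ring
    · intro h; exact absurd (Finset.mem_univ _) h
  · rw [Matrix.one_apply_ne hpq]
    apply Finset.sum_eq_zero; intro j _
    apply Finset.sum_eq_zero; intro l _
    unfold P
    split_ifs with hA hB
    · exact absurd (Prod.ext (hA.1.trans hB.2) (hA.2.trans hB.1)) hpq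
    all_goals ring

lemma gmul_P_K (hθ : θ₀ = 1 ∨ θ₀ = -1) (hN : Even N) :
    gmul M N θ₀ (P M N θ₀) (K M N θ₀) = (θ₀ : ℂ) • K M N θ₀ := by
  funext p q
  rw [Matrix.smul_apply, smul_eq_mul]
  unfold gmul
  rw [Finset.sum_eq_single p.2]
  · rw [Finset.sum_eq_single p.1]
    · unfold P K
      rw [if_pos ⟨rfl, rfl⟩]
      by_cases h1 : p.1 = bar M N p.2
      · by_cases h2 : q.1 = bar M N q.2
        · rw [if_pos ⟨bar_comm M N |>.mp h1, h2⟩, if_pos ⟨h1, h2⟩]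
          have hb : bar M N p.1 = p.2 := ((bar_comm M N).mp h1).symm
          have hk := key M N θ₀ hθ hN p.1
          rw [hb] at hk
          have hgr : gr M N θ₀ p.1 = gr M N θ₀ p.2 := by rw [h1, gr_bar]
          rw [hgr] at hk ⊢
          have he : (-1:ℂ)^((gr M N θ₀ p.2 + gr M N θ₀ p.2)*(gr M N θ₀ p.2 + gr M N θ₀ q.1)) = 1 := by
            rcases gr_mem M N θ₀ p.2 with h|h <;> rcases gr_mem M N θ₀ q.1 with h'|h' <;>
              rw [h, h'] <;> norm_num
          rw [he, one_mul]
          linear_combination ((-1:ℂ)^(gr M N θ₀ q.2 * gr M N θ₀ p.2) * th M N q.2) * hk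
        · rw [if_neg (by rintro ⟨-, hc⟩; exact h2 hc), if_neg (by rintro ⟨-, hc⟩; exact h2 hc)]
          ring
      · rw [if_neg (by rintro ⟨hc, -⟩; exact h1 ((bar_comm M N).mp hc)),
           if_neg (by rintro ⟨hc, -⟩; exact h1 hc)]
        ring
    · intro b _ hb
      unfold P
      rw [if_neg (by rintro ⟨hc, -⟩; exact hb hc.symm)]
      ring
    · intro h; exact absurd (Finset.mem_univ _) h
  · intro b _ hb
    apply Finset.sum_eq_zero
    intro l _
    unfold P
    rw [if_neg (by rintro ⟨-, hc⟩; exact hb hc.symm)]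
    ring
  · intro h; exact absurd (Finset.mem_univ _) h

lemma gmul_K_P (hθ : θ₀ = 1 ∨ θ₀ = -1) (hN : Even N) :
    gmul M N θ₀ (K M N θ₀) (P M N θ₀) = (θ₀ : ℂ) • K M N θ₀ := by
  funext p q
  rw [Matrix.smul_apply, smul_eq_mul]
  unfold gmul
  rw [Finset.sum_eq_single q.2]
  · rw [Finset.sum_eq_single q.1]
    · unfold P K
      by_cases h1 : p.1 = bar M N p.2
      · by_cases h2 : q.1 = bar M N q.2
        · rw [if_pos ⟨h1, (bar_comm M N).mp h2⟩, if_pos ⟨rfl, rfl⟩, if_pos ⟨h1, h2⟩]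
          have hb : bar M N q.1 = q.2 := ((bar_comm M N).mp h2).symm
          have hk := key M N θ₀ hθ hN q.1
          rw [hb] at hk
          have hgr : gr M N θ₀ q.1 = gr M N θ₀ q.2 := by rw [h2, gr_bar]
          rw [hgr] at hk ⊢
          have he : (-1:ℂ)^((gr M N θ₀ p.2 + gr M N θ₀ q.2)*(gr M N θ₀ q.2 + gr M N θ₀ q.2)) = 1 := by
            rcases gr_mem M N θ₀ p.2 with h|h <;> rcases gr_mem M N θ₀ q.2 with h'|h' <;>
              rw [h, h'] <;> norm_num
          rw [he, one_mul]
          linear_combination ((-1:ℂ)^(gr M N θ₀ q.2 * gr M N θ₀ p.2) * th M N p.2) * hk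
        · have h2' : ¬ q.2 = bar M N q.1 := fun hc => h2 ((bar_comm M N).mp hc)
          simp [h2, h2']
      · simp [h1]
    · intro b _ hb
      unfold P
      rw [if_neg (by rintro ⟨-, hc⟩; exact hb hc)]
      ring
    · intro h; exact absurd (Finset.mem_univ _) h
  · intro b _ hb
    apply Finset.sum_eq_zero
    intro l _
    unfold P
    rw [if_neg (by rintro ⟨hc, -⟩; exact hb hc)]
    ring
  · intro h; exact absurd (Finset.mem_univ _) h

lemma gmul_K_K (hθ : θ₀ = 1 ∨ θ₀ = -1) :
    gmul M N θ₀ (K M N θ₀) (K M N θ₀) = ((θ₀ : ℂ) * ((M : ℂ) - N)) • K M N θ₀ := by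
  funext p q
  rw [Matrix.smul_apply, smul_eq_mul]
  unfold gmul
  rw [Finset.sum_comm]
  have hcol : ∀ l : Fin (M + N),
      (∑ j : Fin (M + N),
        (-1 : ℂ) ^ ((gr M N θ₀ p.2 + gr M N θ₀ l) * (gr M N θ₀ j + gr M N θ₀ q.1)) *
          K M N θ₀ p (j, l) * K M N θ₀ (j, l) q)
      = (-1 : ℂ) ^ ((gr M N θ₀ p.2 + gr M N θ₀ l) * (gr M N θ₀ (bar M N l) + gr M N θ₀ q.1)) *
          K M N θ₀ p (bar M N l, l) * K M N θ₀ (bar M N l, l) q := by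
    intro l
    rw [Finset.sum_eq_single (bar M N l)]
    · intro b _ hb
      unfold K
      rw [if_neg (by rintro ⟨-, hc⟩; exact hb hc)]
      ring
    · intro h; exact absurd (Finset.mem_univ _) h
  simp only [hcol]
  by_cases h1 : p.1 = bar M N p.2
  · by_cases h2 : q.1 = bar M N q.2
    · have hKpq : K M N θ₀ p q
          = (-1 : ℂ) ^ (gr M N θ₀ q.2 * gr M N θ₀ p.2) * th M N q.2 * th M N p.2 := by
        unfold K; rw [if_pos ⟨h1, h2⟩]
      rw [hKpq]
      have hterm : ∀ l : Fin (M + N),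
          (-1 : ℂ) ^ ((gr M N θ₀ p.2 + gr M N θ₀ l) * (gr M N θ₀ (bar M N l) + gr M N θ₀ q.1)) *
            K M N θ₀ p (bar M N l, l) * K M N θ₀ (bar M N l, l) q
          = ((-1 : ℂ) ^ (gr M N θ₀ q.2 * gr M N θ₀ p.2) * th M N q.2 * th M N p.2) *
              (-1 : ℂ) ^ gr M N θ₀ l := by
        intro l
        unfold K
        rw [if_pos ⟨h1, rfl⟩, if_pos ⟨rfl, h2⟩]
        rw [gr_bar]
        have hgr : gr M N θ₀ q.1 = gr M N θ₀ q.2 := by rw [h2, gr_bar]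
        rw [hgr]
        have ht := th_sq M N l
        rcases gr_mem M N θ₀ p.2 with h|h <;> rcases gr_mem M N θ₀ l with h'|h' <;>
          rcases gr_mem M N θ₀ q.2 with h''|h'' <;> rw [h, h', h''] <;>
          first
          | linear_combination (th M N p.2 * th M N q.2) * ht
          | linear_combination (-(th M N p.2 * th M N q.2)) * ht
      simp only [hterm]
      rw [← Finset.mul_sum, sum_pow M N θ₀ hθ]
      ring
    · simp [K, h2]
  · simp [K, h1]

lemma gmul_add_left (A B C : Mat M N) :
    gmul M N θ₀ (A + B) C = gmul M N θ₀ A C + gmul M N θ₀ B C := by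
  funext p q
  simp only [gmul, Matrix.add_apply, mul_add, add_mul, Finset.sum_add_distrib]

lemma gmul_add_right (A B C : Mat M N) :
    gmul M N θ₀ A (B + C) = gmul M N θ₀ A B + gmul M N θ₀ A C := by
  funext p q
  simp only [gmul, Matrix.add_apply, mul_add, add_mul, Finset.sum_add_distrib]

lemma gmul_smul_left (c : ℂ) (A B : Mat M N) :
    gmul M N θ₀ (c • A) B = c • gmul M N θ₀ A B := by
  funext p q
  simp only [gmul, Matrix.smul_apply, smul_eq_mul, Finset.mul_sum]
  exact Finset.sum_congr rfl fun j _ => Finset.sum_congr rfl fun l _ => by ring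

lemma gmul_smul_right (c : ℂ) (A B : Mat M N) :
    gmul M N θ₀ A (c • B) = c • gmul M N θ₀ A B := by
  funext p q
  simp only [gmul, Matrix.smul_apply, smul_eq_mul, Finset.mul_sum]
  exact Finset.sum_congr rfl fun j _ => Finset.sum_congr rfl fun l _ => by ring

lemma coeffK (t mm nn u k : ℂ) (hk : 2 * k = (mm - nn - 2) * t)
    (hu : u ≠ 0) (h1 : u + k ≠ 0) (h2 : -u + k ≠ 0) :
    -(u+k)⁻¹ + -(-u+k)⁻¹ + (u⁻¹ * -(-u+k)⁻¹ + -(u+k)⁻¹ * (-u)⁻¹) * t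
      + -(u+k)⁻¹ * -(-u+k)⁻¹ * (t*(mm-nn)) = 0 := by
  rw [inv_neg]
  field_simp
  linear_combination (-u) * hk

/-- unitarity `R₁₂(u) R₁₂(-u) = (1 - 1/u²) I`. -/
theorem statement10 (hθ : θ₀ = 1 ∨ θ₀ = -1) (hN : Even N)
    (u : ℂ) (hu : u ≠ 0) (huk : u + kap M N θ₀ ≠ 0) (huk' : u - kap M N θ₀ ≠ 0) :
    gmul M N θ₀ (R M N θ₀ u) (R M N θ₀ (-u)) = (1 - 1 / u ^ 2) • (1 : Mat M N) := by
  set a : ℂ := u⁻¹ with ha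
  set b : ℂ := -(u + kap M N θ₀)⁻¹ with hb
  set c : ℂ := (-u)⁻¹ with hc
  set d : ℂ := -(-u + kap M N θ₀)⁻¹ with hd
  have hR1 : R M N θ₀ u = 1 + a • P M N θ₀ + b • K M N θ₀ := by
    rw [R, sub_eq_add_neg, ← neg_smul]
  have hR2 : R M N θ₀ (-u) = 1 + c • P M N θ₀ + d • K M N θ₀ := by
    rw [R, sub_eq_add_neg, ← neg_smul]
  have huk2 : -u + kap M N θ₀ ≠ 0 := by
    intro h; apply huk'; linear_combination -h
  have expand : gmul M N θ₀ (R M N θ₀ u) (R M N θ₀ (-u))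
      = (1 + a * c) • (1 : Mat M N) + (a + c) • P M N θ₀
        + (b + d + (a * d + b * c) * (θ₀ : ℂ)
            + b * d * ((θ₀ : ℂ) * ((M : ℂ) - N))) • K M N θ₀ := by
    rw [hR1, hR2]
    simp only [gmul_add_left, gmul_add_right, gmul_smul_left, gmul_smul_right,
      gmul_one_left, gmul_one_right, gmul_P_P, gmul_P_K M N θ₀ hθ hN,
      gmul_K_P M N θ₀ hθ hN, gmul_K_K M N θ₀ hθ]
    module
  have hc1 : a + c = 0 := by
    rw [ha, hc]
    field_simp
    ring
  have hcK : b + d + (a * d + b * c) * (θ₀ : ℂ) + b * d * ((θ₀ : ℂ) * ((M : ℂ) - N)) = 0 := by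
    rw [ha, hb, hc, hd]
    exact coeffK (θ₀ : ℂ) (M : ℂ) (N : ℂ) u (kap M N θ₀) (by rw [kap]; ring) hu huk huk2
  have hc0 : 1 + a * c = 1 - 1 / u ^ 2 := by
    rw [ha, hc]
    field_simp
    ring
  rw [expand, hc1, hcK, zero_smul, zero_smul, add_zero, add_zero, hc0]
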